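/- Let g(y) := (−y³ + 2y² + y − 1)/(2y² + 4y − 3). For all reals m₁, m₂ with 0 ≤ m₂ ≤ m₁ ≤ 1/2, the condition (m₁ ≥ g(m₂) and m₂ ≥ g(m₁)) holds if and only if the condition (m₁ ≥ 1/3 and m₂ ≥ g(m₁)) holds. (This equivalence shows that Claim 1 and Theorem 2(3) state the same characterization.) -/
import Mathlib


/-- `g(y) := (−y³ + 2y² + y − 1)/(2y² + 4y − 3)`. -/
noncomputable def g (y : ℝ) : ℝ := (-y^3 + 2*y^2 + y - 1) / (2*y^2 + 4*y - 3)

/-- For `0 ≤ m₂ ≤ m₁ ≤ 1/2`: `(m₁ ≥ g(m₂) ∧ m₂ ≥ g(m₁)) ↔ (m₁ ≥ 1/3 ∧ m₂ ≥ g(m₁))`. -/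
theorem claim_thm_equivalence (m₁ m₂ : ℝ) (h0 : 0 ≤ m₂) (h1 : m₂ ≤ m₁) (h2 : m₁ ≤ 1/2) :
    (g m₂ ≤ m₁ ∧ g m₁ ≤ m₂) ↔ (1/3 ≤ m₁ ∧ g m₁ ≤ m₂) := by
  have h0' : (0:ℝ) ≤ m₁ := le_trans h0 h1
  have h2' : m₂ ≤ 1/2 := le_trans h1 h2
  have hd1 : 2*m₁^2 + 4*m₁ - 3 < 0 := by nlinarith
  have hd2 : 2*m₂^2 + 4*m₂ - 3 < 0 := by nlinarith
  unfold g
  rw [div_le_iff_of_neg hd2, div_le_iff_of_neg hd1]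
  have hm : 0 ≤ (m₁ - m₂) * ((m₁ + m₂ - 1)^2 + m₁*m₂ + 1) := by
    apply mul_nonneg (by linarith)
    have := sq_nonneg (m₁ + m₂ - 1)
    have := mul_nonneg h0' h0
    linarith
  constructor
  · rintro ⟨hA, hB⟩
    refine ⟨?_, hB⟩
    by_contra hc
    push_neg at hc
    have hq : (0:ℝ) < 1 - m₁ - m₁^2 := by nlinarith
    have h3 : (0:ℝ) < 1 - 3*m₁ := by linarith
    have key : m₁*(2*m₁^2+4*m₁-3) ≤ m₂*(2*m₁^2+4*m₁-3) := by
      have := mul_nonneg (sub_nonneg.2 h1) (neg_nonneg.2 hd1.le)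
      nlinarith
    nlinarith [mul_pos h3 hq]
  · rintro ⟨hA, hB⟩
    refine ⟨?_, hB⟩
    nlinarith [hm, hB]
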